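/- Let f be a type function and let S, T ∈ 𝓟_f^0 be incomparable (neither S ⊆ T nor T ⊆ S). Then S^↓ ∩ T^↓ is either empty or a chain, and S^↑ ∩ T^↑ is either empty or a chain. -/

import Mathlib

open Classical

namespace HOT

/-- Binary strings of length `n`, identified with `{0,1}^n`. -/
abbrev Str (n : ℕ) := Fin n → Bool

/-- The all-zeros string `θ`. -/
def theta (n : ℕ) : Str n := fun _ => false

/-- `𝓕_n`: boolean functions on `{0,1}^n` with `f(θ) = 1`. -/
def Fcal (n : ℕ) : Set (Str n → Bool) := {f | f (theta n) = true}

/-- The complement `f* = 1 - f + p_n`. -/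
noncomputable def star {n : ℕ} (f : Str n → Bool) : Str n → Bool :=
  fun s => if s = theta n then true else !(f s)

/-- First block `s¹` of a string `s ∈ {0,1}^{m+n}`. -/
def fstStr {m n : ℕ} (s : Str (m + n)) : Str m := fun i => s (Fin.castAdd n i)

/-- Second block `s²` of a string `s ∈ {0,1}^{m+n}`. -/
def sndStr {m n : ℕ} (s : Str (m + n)) : Str n := fun j => s (Fin.natAdd m j)

/-- Tensor product `(f ⊗ g)(s) = f(s¹) · g(s²)`. -/
noncomputable def tensor {m n : ℕ} (f : Str m → Bool) (g : Str n → Bool) :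
    Str (m + n) → Bool :=
  fun s => f (fstStr s) && g (sndStr s)

/-- `f ⅋ g := (f* ⊗ g*)*`. -/
noncomputable def parr {m n : ℕ} (f : Str m → Bool) (g : Str n → Bool) :
    Str (m + n) → Bool :=
  star (tensor (star f) (star g))

/-- The causal product `f ◁ g` (`f` on the first `m` bits, `g` on the last `n` bits):
`(f ◁ g)(s) = f(s¹)` if `s¹ ≠ θ_m`, else `g(s²)`. -/
noncomputable def causalL {m n : ℕ} (f : Str m → Bool) (g : Str n → Bool) :
    Str (m + n) → Bool :=
  fun s => if fstStr s = theta m then g (sndStr s) else f (fstStr s)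

/-- The causal product `g ◁ f` (`f` on the first `m` bits, `g` on the last `n` bits):
`(g ◁ f)(s) = g(s²)` if `s² ≠ θ_n`, else `f(s¹)`. -/
noncomputable def causalR {m n : ℕ} (f : Str m → Bool) (g : Str n → Bool) :
    Str (m + n) → Bool :=
  fun s => if sndStr s = theta n then f (fstStr s) else g (sndStr s)

/-- `p_T(s) = 1` iff `s_i = 0` for all `i ∈ T`. -/
noncomputable def pSet {n : ℕ} (T : Set (Fin n)) : Str n → Bool :=
  fun s => decide (∀ i ∈ T, s i = false)

/-- The string `e^i` with `1` exactly in position `i`. -/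
def eStr {n : ℕ} (i : Fin n) : Str n := fun j => decide (j = i)

/-- The string `e^{i,j}` with `1` exactly in positions `i` and `j`. -/
def e2Str {n : ℕ} (i j : Fin n) : Str n := fun l => decide (l = i ∨ l = j)

/-- Input indices `I_f = {i : f(e^i) = 0}`. -/
def Iset {n : ℕ} (f : Str n → Bool) : Set (Fin n) := {i | f (eStr i) = false}

/-- Output indices `O_f = {j : f(e^j) = 1}`. -/
def Oset {n : ℕ} (f : Str n → Bool) : Set (Fin n) := {j | f (eStr j) = true}

/-- `f` is a subtype if `p_{I_f} ≤ f ≤ (p_{O_f})*` pointwise. -/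
def IsSubtype {n : ℕ} (f : Str n → Bool) : Prop :=
  pSet (Iset f) ≤ f ∧ f ≤ star (pSet (Oset f))

/-- The partial order `≤_O`: `s ≤_O t` iff `s_i ≤ t_i` for `i ∈ O` and `s_i ≥ t_i` for
`i ∉ O`. -/
def leO {n : ℕ} (O : Set (Fin n)) (s t : Str n) : Prop :=
  ∀ i, (i ∈ O → s i ≤ t i) ∧ (i ∉ O → t i ≤ s i)

/-- `f` is monotone (with respect to `≤_{O_f}`). -/
def MonotoneF {n : ℕ} (f : Str n → Bool) : Prop :=
  ∀ s t, leO (Oset f) s t → f s ≤ f t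

/-- The action of a permutation on strings: `σ(s)_i = s_{σ⁻¹(i)}`. -/
def permAct {n : ℕ} (σ : Equiv.Perm (Fin n)) (s : Str n) : Str n := fun i => s (σ⁻¹ i)

/-- `(f ∘ σ)(s) = f(σ(s))`. -/
def permComp {n : ℕ} (f : Str n → Bool) (σ : Equiv.Perm (Fin n)) : Str n → Bool :=
  fun s => f (permAct σ s)

/-- The inductively defined family `𝓣_n` of type functions. -/
inductive IsType : (n : ℕ) → (Str n → Bool) → Prop
  | one : IsType 1 (fun _ => true)
  | dual {n : ℕ} {f : Str n → Bool} : IsType n f → IsType n (star f)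
  | perm {n : ℕ} {f : Str n → Bool} (σ : Equiv.Perm (Fin n)) :
      IsType n f → IsType n (permComp f σ)
  | tens {m n : ℕ} {f : Str m → Bool} {g : Str n → Bool} :
      IsType m f → IsType n g → IsType (m + n) (tensor f g)

/-- Interpretation of a bit as an integer. -/
def toZ (b : Bool) : ℤ := (b.toNat : ℤ)

/-- `f` is a chain type: `f = Σ_{i=0}^N (-1)^i p_{S_i}` for a strictly increasing chain
`S_0 ⊊ ⋯ ⊊ S_N ⊆ [n]` with `N` even. -/
def IsChainType {n : ℕ} (f : Str n → Bool) : Prop :=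
  ∃ N : ℕ, Even N ∧ ∃ S : Fin (N + 1) → Set (Fin n), StrictMono S ∧
    ∀ s : Str n, toZ (f s) = ∑ i : Fin (N + 1), (-1 : ℤ) ^ (i : ℕ) * toZ (pSet (S i) s)

/-- The Möbius transform `f̂_T`. -/
noncomputable def mobius {n : ℕ} (f : Str n → Bool) (T : Set (Fin n)) : ℤ :=
  ∑ s : Str n, if ∀ j, j ∉ T → s j = true then
    (-1 : ℤ) ^ (∑ j : Fin n, if j ∈ T then (s j).toNat else 0) * toZ (f s)
  else 0

/-- The structure poset `𝓟_f = {T ⊆ [n] : f̂_T ≠ 0}`, ordered by inclusion. -/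
noncomputable def structPoset {n : ℕ} (f : Str n → Bool) : Set (Set (Fin n)) :=
  {T | mobius f T ≠ 0}

/-- The label set `L_T = T ∖ ⋃ {S ∈ 𝓟_f : S ⊊ T}`. -/
noncomputable def labels {n : ℕ} (f : Str n → Bool) (T : Set (Fin n)) : Set (Fin n) :=
  T \ ⋃₀ {S | S ∈ structPoset f ∧ S ⊂ T}

/-- The reduced structure poset `𝓟_f^0`: `∅` (if `∅ ∈ 𝓟_f`) together with all
`T ∈ 𝓟_f` with `L_T ≠ ∅`. -/
noncomputable def reducedPoset {n : ℕ} (f : Str n → Bool) : Set (Set (Fin n)) :=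
  {T | T ∈ structPoset f ∧ (T = ∅ ∨ labels f T ≠ ∅)}

/-- The rank `ρ_f(T)`: the length of a longest chain in `𝓟_f` with top element `T`
(this is the length of any maximal such chain in the graded poset `𝓟_f`). -/
noncomputable def rank {n : ℕ} (f : Str n → Bool) (T : Set (Fin n)) : ℕ :=
  sSup {k | ∃ c : Fin (k + 1) → Set (Fin n), StrictMono c ∧
    (∀ i, c i ∈ structPoset f) ∧ c (Fin.last k) = T}

/-- The rank `r(f)` of the whole poset `𝓟_f`: the common length of its maximal chains. -/
noncomputable def rk {n : ℕ} (f : Str n → Bool) : ℕ :=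
  sSup {k | ∃ c : Fin (k + 1) → Set (Fin n), StrictMono c ∧ ∀ i, c i ∈ structPoset f}

/-- `𝕋_i^f = {T ∈ 𝓟_f : i ∈ L_T}`. -/
noncomputable def Tset {n : ℕ} (f : Str n → Bool) (i : Fin n) : Set (Set (Fin n)) :=
  {T | T ∈ structPoset f ∧ i ∈ labels f T}

/-- The rank `r_f(i)` of an index: the common rank of elements of `𝕋_i^f`, or `r(f)+1`
if `𝕋_i^f = ∅` (a free output). -/
noncomputable def idxRank {n : ℕ} (f : Str n → Bool) (i : Fin n) : ℕ :=
  if (Tset f i).Nonempty then sSup (rank f '' Tset f i) else rk f + 1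

/-- `X` is the greatest lower bound of `S` and `T` in the poset `(P, ⊆)`. -/
def IsGLBIn {n : ℕ} (P : Set (Set (Fin n))) (S T X : Set (Fin n)) : Prop :=
  X ∈ P ∧ X ⊆ S ∧ X ⊆ T ∧ ∀ Y ∈ P, Y ⊆ S → Y ⊆ T → Y ⊆ X

/-- `X` is the least upper bound of `S` and `T` in the poset `(P, ⊆)`. -/
def IsLUBIn {n : ℕ} (P : Set (Set (Fin n))) (S T X : Set (Fin n)) : Prop :=
  X ∈ P ∧ S ⊆ X ∧ T ⊆ X ∧ ∀ Y ∈ P, S ⊆ Y → T ⊆ Y → X ⊆ Y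

/-- `S^↓`: the downset generated by `S` in `𝓟_f^0`. -/
noncomputable def downSet {n : ℕ} (f : Str n → Bool) (S : Set (Fin n)) :
    Set (Set (Fin n)) :=
  {X | X ∈ reducedPoset f ∧ X ⊆ S}

/-- `S^↑`: the upset generated by `S` in `𝓟_f^0`. -/
noncomputable def upSet {n : ℕ} (f : Str n → Bool) (S : Set (Fin n)) :
    Set (Set (Fin n)) :=
  {X | X ∈ reducedPoset f ∧ S ⊆ X}

/-- The pair rank `r_f(i,j)`: `max{ρ_f(S ∧ T) : S ∈ 𝕋_i^f, T ∈ 𝕋_j^f, S ∧ T exists in 𝓟_f}`;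
`-1` if this set is empty, unless `i` or `j` is a free output, in which case it is
`min{r_f(i), r_f(j)}`. -/
noncomputable def pairRank {n : ℕ} (f : Str n → Bool) (i j : Fin n) : ℤ :=
  if _h : ∃ r : ℤ, ∃ S ∈ Tset f i, ∃ T ∈ Tset f j, ∃ X, IsGLBIn (structPoset f) S T X ∧
      r = (rank f X : ℤ) then
    sSup {r : ℤ | ∃ S ∈ Tset f i, ∃ T ∈ Tset f j, ∃ X, IsGLBIn (structPoset f) S T X ∧
      r = (rank f X : ℤ)}
  else if Tset f i = ∅ ∨ Tset f j = ∅ then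
    min (idxRank f i : ℤ) (idxRank f j : ℤ)
  else -1

/-- Membership in the sublattice generated by a set `S`. -/
inductive InLatGen {α : Type*} [Lattice α] (S : Set α) : α → Prop
  | base {a : α} : a ∈ S → InLatGen S a
  | sup {a b : α} : InLatGen S a → InLatGen S b → InLatGen S (a ⊔ b)
  | inf {a b : α} : InLatGen S a → InLatGen S b → InLatGen S (a ⊓ b)

/-- For `s ≰_O θ`, `f_s` is the function with support `U_s ∪ U_θ` (w.r.t. `≤_O`). -/
noncomputable def fStr {n : ℕ} (O : Set (Fin n)) (s : Str n) : Str n → Bool :=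
  fun t => decide (leO O s t ∨ leO O (theta n) t)

/-- A string `s ∉ D_θ ∪ U_θ` is basic (for `≤_O`) if `s_j = 1` for exactly one `j ∈ O`
and `s_i = 0` for at most one `i ∈ I = Oᶜ`. -/
def IsBasic {n : ℕ} (O : Set (Fin n)) (s : Str n) : Prop :=
  ¬ leO O s (theta n) ∧ ¬ leO O (theta n) s ∧
  (∃! j, j ∈ O ∧ s j = true) ∧
  (∀ i i', i ∈ Oᶜ → i' ∈ Oᶜ → s i = false → s i' = false → i = i')

-- auxiliary
def NB {n : ℕ} (P : Set (Set (Fin n))) : Prop :=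
  ∀ S ∈ P, ∀ T ∈ P, ∀ z ∈ P, ∀ z' ∈ P,
    z ⊆ S → z ⊆ T → z' ⊆ S → z' ⊆ T → ¬ S ⊆ T → ¬ T ⊆ S → z ⊆ z' ∨ z' ⊆ z

lemma sum_sign_zero {n : ℕ} (T : Set (Fin n)) (hT : T ≠ ∅) :
    ∑ s : Str n, (if (∀ j, j ∉ T → s j = true) then
      ((-1:ℤ))^(∑ j : Fin n, if j ∈ T then (s j).toNat else 0) else 0) = 0 := by
  obtain ⟨j₀, hj₀⟩ := Set.nonempty_iff_ne_empty.2 hT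
  refine Finset.sum_involution (fun s _ => Function.update s j₀ (!s j₀)) ?_ ?_ ?_ ?_
  · intro s _
    by_cases hc : (∀ j, j ∉ T → s j = true)
    · have hc' : (∀ j, j ∉ T → (Function.update s j₀ (!s j₀)) j = true) := by
        intro j hj
        rw [Function.update_of_ne (by rintro rfl; exact hj hj₀)]
        exact hc j hj
      rw [if_pos hc, if_pos hc']
      have hE : ∀ t : Str n, (∑ j : Fin n, if j ∈ T then (t j).toNat else 0) =
          (∑ j ∈ Finset.univ.erase j₀, if j ∈ T then (t j).toNat else 0) + (t j₀).toNat := by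
        intro t
        rw [← Finset.sum_erase_add _ _ (Finset.mem_univ j₀), if_pos hj₀]
      have hEe : (∑ j ∈ Finset.univ.erase j₀, if j ∈ T then ((Function.update s j₀ (!s j₀)) j).toNat else 0)
          = ∑ j ∈ Finset.univ.erase j₀, if j ∈ T then (s j).toNat else 0 := by
        apply Finset.sum_congr rfl
        intro j hj
        rw [Function.update_of_ne (Finset.ne_of_mem_erase hj)]
      rw [hE, hE, hEe]
      simp only [Function.update_self]
      cases h : s j₀ <;> simp [h, pow_succ] <;> ring
    · have hc' : ¬ (∀ j, j ∉ T → (Function.update s j₀ (!s j₀)) j = true) := by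
        intro hc'
        exact hc (fun j hj => by
          have := hc' j hj
          rwa [Function.update_of_ne (by rintro rfl; exact hj hj₀)] at this)
      rw [if_neg hc, if_neg hc', add_zero]
  · intro s _ _ h
    have := congrFun h j₀
    simp at this
  · intro s _; exact Finset.mem_univ _
  · intro s _
    funext j
    by_cases h : j = j₀
    · subst h; simp
    · simp [Function.update_of_ne h]

lemma mobius_star_eq_neg {n : ℕ} {f : Str n → Bool} (hf : f (theta n) = true)
    {T : Set (Fin n)} (hT0 : T ≠ ∅) (hTu : T ≠ Set.univ) :
    mobius (star f) T = - mobius f T := by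
  have key : ∀ s : Str n, (∀ j, j ∉ T → s j = true) →
      toZ (star f s) = 1 - toZ (f s) := by
    intro s hs
    have hsθ : s ≠ theta n := by
      intro h; subst h
      obtain ⟨j, hj⟩ : ∃ j, j ∉ T := by
        by_contra hc
        push_neg at hc
        exact hTu (Set.eq_univ_of_forall hc)
      simpa [theta] using hs j hj
    rw [star, if_neg hsθ]
    cases h : f s <;> simp [toZ, h]
  have : mobius (star f) T = (∑ s : Str n, (if (∀ j, j ∉ T → s j = true) then
      ((-1:ℤ))^(∑ j : Fin n, if j ∈ T then (s j).toNat else 0) else 0)) - mobius f T := by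
    rw [mobius, mobius, ← Finset.sum_sub_distrib]
    apply Finset.sum_congr rfl
    intro s _
    by_cases hc : (∀ j, j ∉ T → s j = true)
    · rw [if_pos hc, if_pos hc, if_pos hc, key s hc]; ring
    · simp [hc]
  rw [this, sum_sign_zero T hT0, zero_sub]

lemma labels_star {n : ℕ} {f : Str n → Bool} (hf : f (theta n) = true)
    (T : Set (Fin n)) : labels (star f) T = labels f T := by
  unfold labels
  congr 1
  ext x
  simp only [Set.mem_sUnion, Set.mem_setOf_eq]
  constructor
  · rintro ⟨S, ⟨hS1, hS2⟩, hx⟩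
    rcases eq_or_ne S ∅ with rfl | hS0
    · exact absurd hx (Set.notMem_empty x)
    · have hSu : S ≠ Set.univ := fun h => by
        subst h
        exact hS2.not_subset (Set.subset_univ T)
      refine ⟨S, ⟨?_, hS2⟩, hx⟩
      rw [structPoset, Set.mem_setOf_eq] at hS1 ⊢
      rw [mobius_star_eq_neg hf hS0 hSu] at hS1
      simpa using hS1
  · rintro ⟨S, ⟨hS1, hS2⟩, hx⟩
    rcases eq_or_ne S ∅ with rfl | hS0
    · exact absurd hx (Set.notMem_empty x)
    · have hSu : S ≠ Set.univ := fun h => by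
        subst h
        exact hS2.not_subset (Set.subset_univ T)
      refine ⟨S, ⟨?_, hS2⟩, hx⟩
      rw [structPoset, Set.mem_setOf_eq] at hS1 ⊢
      rw [mobius_star_eq_neg hf hS0 hSu]
      simpa using hS1


lemma image_ssubset_iff {α : Type*} (σ : Equiv.Perm α) {A B : Set α} :
    ⇑σ '' A ⊂ ⇑σ '' B ↔ A ⊂ B := by
  simp [Set.ssubset_def, Set.image_subset_image_iff σ.injective]

lemma mobius_perm {n : ℕ} (f : Str n → Bool) (σ : Equiv.Perm (Fin n)) (T : Set (Fin n)) :
    mobius (permComp f σ) T = mobius f (σ '' T) := by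
  unfold mobius permComp
  refine Fintype.sum_equiv (Equiv.arrowCongr σ (Equiv.refl Bool)) _ _ ?_
  intro s
  set e := Equiv.arrowCongr σ (Equiv.refl Bool) with he'
  have he : permAct σ s = e s := rfl
  have hcond : (∀ j, j ∉ T → s j = true) = (∀ k, k ∉ ⇑σ '' T → (e s) k = true) := by
    apply propext
    constructor
    · intro h k hk
      have : σ⁻¹ k ∉ T := fun hmem => hk ⟨σ⁻¹ k, hmem, by simp⟩
      exact h _ this
    · intro h j hj
      have h1 : σ j ∉ ⇑σ '' T := by
        rw [σ.injective.mem_set_image]; exact hj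
      have := h (σ j) h1
      simpa [he', Equiv.arrowCongr] using this
  have hexp : (∑ j : Fin n, if j ∈ T then (s j).toNat else 0)
      = ∑ k : Fin n, if k ∈ ⇑σ '' T then ((e s) k).toNat else 0 := by
    rw [← Equiv.sum_comp σ (fun k => if k ∈ ⇑σ '' T then ((e s) k).toNat else 0)]
    apply Finset.sum_congr rfl
    intro j _
    have h1 : σ j ∈ ⇑σ '' T ↔ j ∈ T := σ.injective.mem_set_image
    have h2 : (e s) (σ j) = s j := by simp [he', Equiv.arrowCongr]
    rw [h2]
    by_cases hj : j ∈ T <;> simp [hj, h1]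
  rw [he, hexp]
  exact if_congr (iff_of_eq hcond) rfl rfl

lemma struct_perm {n : ℕ} (f : Str n → Bool) (σ : Equiv.Perm (Fin n)) (T : Set (Fin n)) :
    T ∈ structPoset (permComp f σ) ↔ ⇑σ '' T ∈ structPoset f := by
  simp [structPoset, mobius_perm]

lemma labels_perm {n : ℕ} (f : Str n → Bool) (σ : Equiv.Perm (Fin n)) (T : Set (Fin n)) :
    ⇑σ '' labels (permComp f σ) T = labels f (⇑σ '' T) := by
  have hfam : Set.image ⇑σ '' {S | S ∈ structPoset (permComp f σ) ∧ S ⊂ T}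
      = {S | S ∈ structPoset f ∧ S ⊂ ⇑σ '' T} := by
    ext W
    simp only [Set.mem_image, Set.mem_setOf_eq]
    constructor
    · rintro ⟨V, ⟨hV1, hV2⟩, rfl⟩
      exact ⟨(struct_perm f σ V).1 hV1, (image_ssubset_iff σ).2 hV2⟩
    · rintro ⟨hW1, hW2⟩
      refine ⟨⇑σ.symm '' W, ⟨?_, ?_⟩, ?_⟩
      · rw [struct_perm, Equiv.image_symm_image]; exact hW1
      · rw [← image_ssubset_iff σ, Equiv.image_symm_image]; exact hW2
      · exact Equiv.image_symm_image σ W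
  unfold labels
  rw [Set.image_diff σ.injective, Set.image_sUnion, hfam]

lemma RP_perm {n : ℕ} (f : Str n → Bool) (σ : Equiv.Perm (Fin n)) (T : Set (Fin n)) :
    T ∈ reducedPoset (permComp f σ) ↔ ⇑σ '' T ∈ reducedPoset f := by
  unfold reducedPoset
  simp only [Set.mem_setOf_eq, struct_perm]
  constructor
  · rintro ⟨h1, h2⟩
    refine ⟨h1, ?_⟩
    rcases h2 with rfl | h2
    · left; simp
    · right
      rw [← labels_perm]
      simpa using h2
  · rintro ⟨h1, h2⟩
    refine ⟨h1, ?_⟩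
    rcases h2 with h2 | h2
    · left; rwa [Set.image_eq_empty] at h2
    · right
      rw [← labels_perm] at h2
      intro hc
      rw [hc] at h2
      simp at h2

lemma NB_perm {n : ℕ} (f : Str n → Bool) (σ : Equiv.Perm (Fin n))
    (h : NB (reducedPoset f)) : NB (reducedPoset (permComp f σ)) := by
  intro S hS T hT z hz z' hz' h1 h2 h3 h4 h5 h6
  have key := h _ ((RP_perm f σ S).1 hS) _ ((RP_perm f σ T).1 hT)
    _ ((RP_perm f σ z).1 hz) _ ((RP_perm f σ z').1 hz')
    (Set.image_mono h1) (Set.image_mono h2)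
    (Set.image_mono h3) (Set.image_mono h4)
    (fun hc => h5 ((Set.image_subset_image_iff σ.injective).1 hc))
    (fun hc => h6 ((Set.image_subset_image_iff σ.injective).1 hc))
  rcases key with k | k
  · exact Or.inl ((Set.image_subset_image_iff σ.injective).1 k)
  · exact Or.inr ((Set.image_subset_image_iff σ.injective).1 k)


-- componentwise subsets
def p1 {m n : ℕ} (U : Set (Fin (m + n))) : Set (Fin m) := {i | Fin.castAdd n i ∈ U}
def p2 {m n : ℕ} (U : Set (Fin (m + n))) : Set (Fin n) := {j | Fin.natAdd m j ∈ U}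
def jn {m n : ℕ} (A : Set (Fin m)) (B : Set (Fin n)) : Set (Fin (m + n)) :=
  (Fin.castAdd n '' A) ∪ (Fin.natAdd m '' B)

lemma cast_ne_nat {m n : ℕ} (i : Fin m) (j : Fin n) :
    Fin.castAdd n i ≠ Fin.natAdd m j := by
  intro h
  have h1 := congrArg Fin.val h
  simp only [Fin.coe_castAdd, Fin.coe_natAdd] at h1
  have := i.isLt
  omega

lemma addCases_surj {m n : ℕ} (x : Fin (m + n)) :
    (∃ i, x = Fin.castAdd n i) ∨ (∃ j, x = Fin.natAdd m j) := by
  refine Fin.addCases (fun i => Or.inl ⟨i, rfl⟩) (fun j => Or.inr ⟨j, rfl⟩) x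

lemma mem_jn_cast {m n : ℕ} {A : Set (Fin m)} {B : Set (Fin n)} (i : Fin m) :
    Fin.castAdd n i ∈ jn A B ↔ i ∈ A := by
  constructor
  · rintro (⟨i', hi', h⟩ | ⟨j', hj', h⟩)
    · have : i' = i := by
        have := congrArg Fin.val h
        simpa [Fin.ext_iff] using this
      exact this ▸ hi'
    · exact absurd h.symm (cast_ne_nat i j')
  · intro h; exact Or.inl ⟨i, h, rfl⟩

lemma mem_jn_nat {m n : ℕ} {A : Set (Fin m)} {B : Set (Fin n)} (j : Fin n) :
    Fin.natAdd m j ∈ jn A B ↔ j ∈ B := by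
  constructor
  · rintro (⟨i', hi', h⟩ | ⟨j', hj', h⟩)
    · exact absurd h (cast_ne_nat i' j)
    · have : j' = j := by
        have := congrArg Fin.val h
        simp only [Fin.coe_natAdd] at this
        have : j'.val = j.val := by omega
        exact Fin.ext this
      exact this ▸ hj'
  · intro h; exact Or.inr ⟨j, h, rfl⟩

lemma p1_jn {m n : ℕ} (A : Set (Fin m)) (B : Set (Fin n)) : p1 (jn A B) = A := by
  ext i; exact mem_jn_cast i

lemma p2_jn {m n : ℕ} (A : Set (Fin m)) (B : Set (Fin n)) : p2 (jn A B) = B := by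
  ext j; exact mem_jn_nat j

lemma jn_p {m n : ℕ} (U : Set (Fin (m + n))) : jn (p1 U) (p2 U) = U := by
  ext x
  rcases addCases_surj x with ⟨i, rfl⟩ | ⟨j, rfl⟩
  · rw [mem_jn_cast]; rfl
  · rw [mem_jn_nat]; rfl

lemma subset_iff_p {m n : ℕ} {U V : Set (Fin (m + n))} :
    U ⊆ V ↔ p1 U ⊆ p1 V ∧ p2 U ⊆ p2 V := by
  constructor
  · intro h
    exact ⟨fun i hi => h hi, fun j hj => h hj⟩
  · rintro ⟨h1, h2⟩ x hx
    rcases addCases_surj x with ⟨i, rfl⟩ | ⟨j, rfl⟩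
    · exact h1 hx
    · exact h2 hx

lemma eq_iff_p {m n : ℕ} {U V : Set (Fin (m + n))} :
    U = V ↔ p1 U = p1 V ∧ p2 U = p2 V := by
  constructor
  · rintro rfl; exact ⟨rfl, rfl⟩
  · rintro ⟨h1, h2⟩
    rw [← jn_p U, ← jn_p V, h1, h2]

lemma p1_empty {m n : ℕ} : p1 (∅ : Set (Fin (m + n))) = ∅ := by
  ext i; simp [p1]

lemma p2_empty {m n : ℕ} : p2 (∅ : Set (Fin (m + n))) = ∅ := by
  ext j; simp [p2]

/-- the splitting equivalence -/
def spl {m n : ℕ} : Str (m + n) ≃ Str m × Str n where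
  toFun s := (fstStr s, sndStr s)
  invFun p := fun x => Fin.addCases p.1 p.2 x
  left_inv s := by
    funext x
    refine Fin.addCases (motive := fun x => Fin.addCases (fstStr s) (sndStr s) x = s x)
      (fun i => ?_) (fun j => ?_) x
    · exact Fin.addCases_left i
    · exact Fin.addCases_right j
  right_inv p := by
    ext x
    · show Fin.addCases p.1 p.2 (Fin.castAdd n x) = p.1 x
      rw [Fin.addCases_left]
    · show Fin.addCases p.1 p.2 (Fin.natAdd m x) = p.2 x
      rw [Fin.addCases_right]

lemma toZ_band (a b : Bool) : toZ (a && b) = toZ a * toZ b := by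
  cases a <;> cases b <;> rfl

lemma mobius_tensor {m n : ℕ} (f : Str m → Bool) (g : Str n → Bool)
    (U : Set (Fin (m + n))) :
    mobius (tensor f g) U = mobius f (p1 U) * mobius g (p2 U) := by
  unfold mobius
  rw [Finset.sum_mul_sum]
  refine Eq.trans (Fintype.sum_equiv spl _ (fun p : Str m × Str n =>
      (if ∀ i, i ∉ p1 U → p.1 i = true then
        (-1 : ℤ) ^ (∑ i : Fin m, if i ∈ p1 U then (p.1 i).toNat else 0) * toZ (f p.1) else 0) *
      (if ∀ j, j ∉ p2 U → p.2 j = true then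
        (-1 : ℤ) ^ (∑ j : Fin n, if j ∈ p2 U then (p.2 j).toNat else 0) * toZ (g p.2) else 0)) ?_)
    (Fintype.sum_prod_type _)
  intro s
  have hcond : (∀ j, j ∉ U → s j = true) ↔
      ((∀ i, i ∉ p1 U → fstStr s i = true) ∧ (∀ j, j ∉ p2 U → sndStr s j = true)) := by
    constructor
    · intro h
      exact ⟨fun i hi => h _ hi, fun j hj => h _ hj⟩
    · rintro ⟨h1, h2⟩ x hx
      rcases addCases_surj x with ⟨i, rfl⟩ | ⟨j, rfl⟩
      · exact h1 i hx
      · exact h2 j hx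
  have hexp : (∑ j : Fin (m + n), if j ∈ U then (s j).toNat else 0) =
      (∑ i : Fin m, if i ∈ p1 U then (fstStr s i).toNat else 0) +
      (∑ j : Fin n, if j ∈ p2 U then (sndStr s j).toNat else 0) := by
    rw [Fin.sum_univ_add]; rfl
  show _ = (if (∀ i, i ∉ p1 U → fstStr s i = true) then
      (-1 : ℤ) ^ (∑ i : Fin m, if i ∈ p1 U then (fstStr s i).toNat else 0) * toZ (f (fstStr s))
    else 0) * (if (∀ j, j ∉ p2 U → sndStr s j = true) then
      (-1 : ℤ) ^ (∑ j : Fin n, if j ∈ p2 U then (sndStr s j).toNat else 0) * toZ (g (sndStr s))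
    else 0)
  by_cases h1 : (∀ i, i ∉ p1 U → fstStr s i = true) <;>
    by_cases h2 : (∀ j, j ∉ p2 U → sndStr s j = true)
  · rw [if_pos h1, if_pos h2, if_pos (hcond.2 ⟨h1, h2⟩), hexp]
    show (-1:ℤ)^(_+_) * toZ (f (fstStr s) && g (sndStr s)) = _
    rw [toZ_band, pow_add]
    ring
  · rw [if_pos h1, if_neg h2, if_neg (fun hc => h2 (hcond.1 hc).2), mul_zero]
  · rw [if_neg h1, if_neg (fun hc => h1 (hcond.1 hc).1), zero_mul]
  · rw [if_neg h1, if_neg (fun hc => h1 (hcond.1 hc).1), zero_mul]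

lemma struct_tensor {m n : ℕ} {f : Str m → Bool} {g : Str n → Bool}
    {U : Set (Fin (m + n))} :
    U ∈ structPoset (tensor f g) ↔ p1 U ∈ structPoset f ∧ p2 U ∈ structPoset g := by
  simp [structPoset, mobius_tensor, mul_ne_zero_iff]


/-- minimal in the structure poset (no strict subset in the poset) -/
def MinP {k : ℕ} (f : Str k → Bool) (A : Set (Fin k)) : Prop :=
  ∀ Z ∈ structPoset f, Z ⊆ A → Z = A

lemma mem_labels {k : ℕ} (h : Str k → Bool) (T : Set (Fin k)) (x : Fin k) :
    x ∈ labels h T ↔ x ∈ T ∧ ∀ S ∈ structPoset h, S ⊂ T → x ∉ S := by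
  simp only [labels, Set.mem_diff, Set.mem_sUnion, Set.mem_setOf_eq, not_exists]
  constructor
  · rintro ⟨h1, h2⟩
    refine ⟨h1, fun S hS hST hx => h2 S ⟨⟨hS, hST⟩, hx⟩⟩
  · rintro ⟨h1, h2⟩
    refine ⟨h1, fun S hx => h2 S hx.1.1 hx.1.2 hx.2⟩

lemma labels_tensor_cast {m n : ℕ} {f : Str m → Bool} {g : Str n → Bool}
    {U : Set (Fin (m + n))} (hU : U ∈ structPoset (tensor f g)) (i : Fin m) :
    Fin.castAdd n i ∈ labels (tensor f g) U ↔
      (i ∈ labels f (p1 U) ∧ MinP g (p2 U)) := by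
  obtain ⟨hU1, hU2⟩ := struct_tensor.1 hU
  rw [mem_labels, mem_labels]
  constructor
  · rintro ⟨hx, hbad⟩
    refine ⟨⟨hx, fun W₁ hW₁ hW₁s hiW₁ => ?_⟩, fun Z hZ hZs => ?_⟩
    · refine hbad (jn W₁ (p2 U)) ?_ ?_ ?_
      · rw [struct_tensor, p1_jn, p2_jn]; exact ⟨hW₁, hU2⟩
      · rw [Set.ssubset_iff_subset_ne]
        constructor
        · rw [subset_iff_p, p1_jn, p2_jn]; exact ⟨hW₁s.subset, subset_rfl⟩
        · intro hc
          rw [eq_iff_p, p1_jn, p2_jn] at hc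
          exact hW₁s.ne hc.1
      · rw [mem_jn_cast]; exact hiW₁
    · by_contra hne
      refine hbad (jn (p1 U) Z) ?_ ?_ ?_
      · rw [struct_tensor, p1_jn, p2_jn]; exact ⟨hU1, hZ⟩
      · rw [Set.ssubset_iff_subset_ne]
        constructor
        · rw [subset_iff_p, p1_jn, p2_jn]; exact ⟨subset_rfl, hZs⟩
        · intro hc
          rw [eq_iff_p, p1_jn, p2_jn] at hc
          exact hne hc.2
      · rw [mem_jn_cast]; exact hx
  · rintro ⟨⟨hx, hbad⟩, hmin⟩
    refine ⟨hx, fun W hW hWs hiW => ?_⟩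
    obtain ⟨hWp1, hWp2⟩ := subset_iff_p.1 hWs.subset
    obtain ⟨hW1, hW2⟩ := struct_tensor.1 hW
    have h2 : p2 W = p2 U := hmin _ hW2 hWp2
    have h1 : p1 W ≠ p1 U := fun hc => hWs.ne (eq_iff_p.2 ⟨hc, h2⟩)
    exact hbad (p1 W) hW1 (Set.ssubset_iff_subset_ne.2 ⟨hWp1, h1⟩) hiW

lemma labels_tensor_nat {m n : ℕ} {f : Str m → Bool} {g : Str n → Bool}
    {U : Set (Fin (m + n))} (hU : U ∈ structPoset (tensor f g)) (j : Fin n) :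
    Fin.natAdd m j ∈ labels (tensor f g) U ↔
      (j ∈ labels g (p2 U) ∧ MinP f (p1 U)) := by
  obtain ⟨hU1, hU2⟩ := struct_tensor.1 hU
  rw [mem_labels, mem_labels]
  constructor
  · rintro ⟨hx, hbad⟩
    refine ⟨⟨hx, fun W₂ hW₂ hW₂s hjW₂ => ?_⟩, fun Z hZ hZs => ?_⟩
    · refine hbad (jn (p1 U) W₂) ?_ ?_ ?_
      · rw [struct_tensor, p1_jn, p2_jn]; exact ⟨hU1, hW₂⟩
      · rw [Set.ssubset_iff_subset_ne]
        constructor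
        · rw [subset_iff_p, p1_jn, p2_jn]; exact ⟨subset_rfl, hW₂s.subset⟩
        · intro hc
          rw [eq_iff_p, p1_jn, p2_jn] at hc
          exact hW₂s.ne hc.2
      · rw [mem_jn_nat]; exact hjW₂
    · by_contra hne
      refine hbad (jn Z (p2 U)) ?_ ?_ ?_
      · rw [struct_tensor, p1_jn, p2_jn]; exact ⟨hZ, hU2⟩
      · rw [Set.ssubset_iff_subset_ne]
        constructor
        · rw [subset_iff_p, p1_jn, p2_jn]; exact ⟨hZs, subset_rfl⟩
        · intro hc
          rw [eq_iff_p, p1_jn, p2_jn] at hc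
          exact hne hc.1
      · rw [mem_jn_nat]; exact hx
  · rintro ⟨⟨hx, hbad⟩, hmin⟩
    refine ⟨hx, fun W hW hWs hjW => ?_⟩
    obtain ⟨hWp1, hWp2⟩ := subset_iff_p.1 hWs.subset
    obtain ⟨hW1, hW2⟩ := struct_tensor.1 hW
    have h1 : p1 W = p1 U := hmin _ hW1 hWp1
    have h2 : p2 W ≠ p2 U := fun hc => hWs.ne (eq_iff_p.2 ⟨h1, hc⟩)
    exact hbad (p2 W) hW2 (Set.ssubset_iff_subset_ne.2 ⟨hWp2, h2⟩) hjW

lemma RP_tensor {m n : ℕ} {f : Str m → Bool} {g : Str n → Bool}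
    {U : Set (Fin (m + n))} :
    U ∈ reducedPoset (tensor f g) ↔
      p1 U ∈ structPoset f ∧ p2 U ∈ structPoset g ∧
      (U = ∅ ∨ (labels f (p1 U) ≠ ∅ ∧ MinP g (p2 U)) ∨
        (labels g (p2 U) ≠ ∅ ∧ MinP f (p1 U))) := by
  constructor
  · rintro ⟨hU, hc⟩
    obtain ⟨h1, h2⟩ := struct_tensor.1 hU
    refine ⟨h1, h2, ?_⟩
    rcases hc with rfl | hc
    · exact Or.inl rfl
    · right
      obtain ⟨x, hx⟩ := Set.nonempty_iff_ne_empty.2 hc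
      rcases addCases_surj x with ⟨i, rfl⟩ | ⟨j, rfl⟩
      · obtain ⟨hl, hm⟩ := (labels_tensor_cast hU i).1 hx
        exact Or.inl ⟨Set.nonempty_iff_ne_empty.1 ⟨i, hl⟩, hm⟩
      · obtain ⟨hl, hm⟩ := (labels_tensor_nat hU j).1 hx
        exact Or.inr ⟨Set.nonempty_iff_ne_empty.1 ⟨j, hl⟩, hm⟩
  · rintro ⟨h1, h2, hc⟩
    have hU : U ∈ structPoset (tensor f g) := struct_tensor.2 ⟨h1, h2⟩
    refine ⟨hU, ?_⟩
    rcases hc with rfl | ⟨hl, hm⟩ | ⟨hl, hm⟩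
    · exact Or.inl rfl
    · right
      obtain ⟨i, hi⟩ := Set.nonempty_iff_ne_empty.2 hl
      exact Set.nonempty_iff_ne_empty.1 ⟨_, (labels_tensor_cast hU i).2 ⟨hi, hm⟩⟩
    · right
      obtain ⟨j, hj⟩ := Set.nonempty_iff_ne_empty.2 hl
      exact Set.nonempty_iff_ne_empty.1 ⟨_, (labels_tensor_nat hU j).2 ⟨hj, hm⟩⟩

lemma min_mem_RP {k : ℕ} {h : Str k → Bool} {A : Set (Fin k)}
    (hA : A ∈ structPoset h) (hm : MinP h A) : A ∈ reducedPoset h := by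
  refine ⟨hA, ?_⟩
  rcases eq_or_ne A ∅ with rfl | hne
  · exact Or.inl rfl
  · right
    obtain ⟨x, hx⟩ := Set.nonempty_iff_ne_empty.2 hne
    refine Set.nonempty_iff_ne_empty.1 ⟨x, (mem_labels h A x).2 ⟨hx, fun S hS hSA hxS => ?_⟩⟩
    exact hSA.ne (hm S hS hSA.subset)

lemma comp1_mem_RP {m n : ℕ} {f : Str m → Bool} {g : Str n → Bool}
    {z : Set (Fin (m + n))} (hz : z ∈ reducedPoset (tensor f g)) :
    p1 z ∈ reducedPoset f := by
  obtain ⟨h1, h2, hc⟩ := RP_tensor.1 hz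
  rcases hc with rfl | ⟨hl, _⟩ | ⟨_, hm⟩
  · exact ⟨by rwa [p1_empty] at h1 ⊢, Or.inl p1_empty⟩
  · exact ⟨h1, Or.inr hl⟩
  · exact min_mem_RP h1 hm

lemma comp2_mem_RP {m n : ℕ} {f : Str m → Bool} {g : Str n → Bool}
    {z : Set (Fin (m + n))} (hz : z ∈ reducedPoset (tensor f g)) :
    p2 z ∈ reducedPoset g := by
  obtain ⟨h1, h2, hc⟩ := RP_tensor.1 hz
  rcases hc with rfl | ⟨_, hm⟩ | ⟨hl, _⟩
  · exact ⟨by rwa [p2_empty] at h2 ⊢, Or.inl p2_empty⟩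
  · exact min_mem_RP h2 hm
  · exact ⟨h2, Or.inr hl⟩

lemma NB_tensor {m n : ℕ} {f : Str m → Bool} {g : Str n → Bool}
    (hf' : NB (reducedPoset f)) (hg' : NB (reducedPoset g)) :
    NB (reducedPoset (tensor f g)) := by
  intro S hS T hT z hz z' hz' hzS hzT hz'S hz'T hST hTS
  -- degenerate cases
  rcases eq_or_ne z ∅ with rfl | hz0
  · exact Or.inl (Set.empty_subset _)
  rcases eq_or_ne z' ∅ with rfl | hz'0
  · exact Or.inr (Set.empty_subset _)
  have hSne : S ≠ ∅ := fun e => hST (e ▸ Set.empty_subset T)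
  have hTne : T ≠ ∅ := fun e => hTS (e ▸ Set.empty_subset S)
  obtain ⟨hA, hB, hScond⟩ := RP_tensor.1 hS
  obtain ⟨hC, hD, hTcond⟩ := RP_tensor.1 hT
  obtain ⟨hX, hY, hzcond⟩ := RP_tensor.1 hz
  obtain ⟨hX', hY', hz'cond⟩ := RP_tensor.1 hz'
  rcases hScond with rfl | hScond; · exact absurd rfl hSne
  rcases hTcond with rfl | hTcond; · exact absurd rfl hTne
  rcases hzcond with rfl | hzcond; · exact absurd rfl hz0
  rcases hz'cond with rfl | hz'cond; · exact absurd rfl hz'0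
  obtain ⟨hXA, hYB⟩ := subset_iff_p.1 hzS
  obtain ⟨hXC, hYD⟩ := subset_iff_p.1 hzT
  obtain ⟨hX'A, hY'B⟩ := subset_iff_p.1 hz'S
  obtain ⟨hX'C, hY'D⟩ := subset_iff_p.1 hz'T
  have hXRP : p1 z ∈ reducedPoset f := comp1_mem_RP hz
  have hX'RP : p1 z' ∈ reducedPoset f := comp1_mem_RP hz'
  have hYRP : p2 z ∈ reducedPoset g := comp2_mem_RP hz
  have hY'RP : p2 z' ∈ reducedPoset g := comp2_mem_RP hz'
  have hARP : p1 S ∈ reducedPoset f := comp1_mem_RP hS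
  have hBRP : p2 S ∈ reducedPoset g := comp2_mem_RP hS
  have hCRP : p1 T ∈ reducedPoset f := comp1_mem_RP hT
  have hDRP : p2 T ∈ reducedPoset g := comp2_mem_RP hT
  rcases hScond with ⟨hlA, hminB⟩ | ⟨hlB, hminA⟩
  · -- B is minimal: Y = Y' = B
    have hYeq : p2 z = p2 S := hminB _ hY hYB
    have hY'eq : p2 z' = p2 S := hminB _ hY' hY'B
    have hYY' : p2 z = p2 z' := hYeq.trans hY'eq.symm
    suffices h : p1 z ⊆ p1 z' ∨ p1 z' ⊆ p1 z by
      rcases h with h | h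
      · exact Or.inl (subset_iff_p.2 ⟨h, hYY' ▸ subset_rfl⟩)
      · exact Or.inr (subset_iff_p.2 ⟨h, hYY' ▸ subset_rfl⟩)
    rcases hTcond with ⟨hlC, hminD⟩ | ⟨hlD, hminC⟩
    · -- B = D, so p1 S and p1 T incomparable
      have hBD : p2 S = p2 T := hminD _ hB (hYeq ▸ hYD)
      have hACn : ¬ p1 S ⊆ p1 T := fun h => hST (subset_iff_p.2 ⟨h, hBD ▸ subset_rfl⟩)
      have hCAn : ¬ p1 T ⊆ p1 S := fun h => hTS (subset_iff_p.2 ⟨h, hBD ▸ subset_rfl⟩)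
      exact hf' _ hARP _ hCRP _ hXRP _ hX'RP hXA hXC hX'A hX'C hACn hCAn
    · -- p1 T minimal: X = X' = C
      have h1 : p1 z = p1 T := hminC _ hX hXC
      have h2 : p1 z' = p1 T := hminC _ hX' hX'C
      exact Or.inl (h1.trans h2.symm ▸ subset_rfl)
  · -- A minimal: X = X' = A
    have hXeq : p1 z = p1 S := hminA _ hX hXA
    have hX'eq : p1 z' = p1 S := hminA _ hX' hX'A
    have hXX' : p1 z = p1 z' := hXeq.trans hX'eq.symm
    suffices h : p2 z ⊆ p2 z' ∨ p2 z' ⊆ p2 z by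
      rcases h with h | h
      · exact Or.inl (subset_iff_p.2 ⟨hXX' ▸ subset_rfl, h⟩)
      · exact Or.inr (subset_iff_p.2 ⟨hXX' ▸ subset_rfl, h⟩)
    rcases hTcond with ⟨hlC, hminD⟩ | ⟨hlD, hminC⟩
    · -- p2 T minimal: Y = Y' = D
      have h1 : p2 z = p2 T := hminD _ hY hYD
      have h2 : p2 z' = p2 T := hminD _ hY' hY'D
      exact Or.inl (h1.trans h2.symm ▸ subset_rfl)
    · -- A = C, so p2 S and p2 T incomparable
      have hAC : p1 S = p1 T := hminC _ hA (hXeq ▸ hXC)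
      have hBDn : ¬ p2 S ⊆ p2 T := fun h => hST (subset_iff_p.2 ⟨hAC ▸ subset_rfl, h⟩)
      have hDBn : ¬ p2 T ⊆ p2 S := fun h => hTS (subset_iff_p.2 ⟨hAC ▸ subset_rfl, h⟩)
      exact hg' _ hBRP _ hDRP _ hYRP _ hY'RP hYB hYD hY'B hY'D hBDn hDBn


lemma RP_star_mem {n : ℕ} {f : Str n → Bool} (hθ : f (theta n) = true)
    {T : Set (Fin n)} (h0 : T ≠ ∅) (hu : T ≠ Set.univ) :
    T ∈ reducedPoset (star f) ↔ T ∈ reducedPoset f := by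
  unfold reducedPoset structPoset
  simp only [Set.mem_setOf_eq, mobius_star_eq_neg hθ h0 hu, neg_ne_zero, labels_star hθ]

lemma NB_star {n : ℕ} {f : Str n → Bool} (hθ : f (theta n) = true)
    (h : NB (reducedPoset f)) : NB (reducedPoset (star f)) := by
  intro S hS T hT z hz z' hz' h1 h2 h3 h4 h5 h6
  have hS0 : S ≠ ∅ := fun e => h5 (by rw [e]; exact Set.empty_subset T)
  have hT0 : T ≠ ∅ := fun e => h6 (by rw [e]; exact Set.empty_subset S)
  have hSu : S ≠ Set.univ := fun e => h6 (by rw [e]; exact Set.subset_univ T)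
  have hTu : T ≠ Set.univ := fun e => h5 (by rw [e]; exact Set.subset_univ S)
  rcases eq_or_ne z ∅ with rfl | hz0
  · exact Or.inl (Set.empty_subset _)
  rcases eq_or_ne z' ∅ with rfl | hz'0
  · exact Or.inr (Set.empty_subset _)
  rcases eq_or_ne z Set.univ with rfl | hzu
  · exact absurd (Set.univ_subset_iff.1 h1) hSu
  rcases eq_or_ne z' Set.univ with rfl | hz'u
  · exact absurd (Set.univ_subset_iff.1 h3) hSu
  exact h S ((RP_star_mem hθ hS0 hSu).1 hS) T ((RP_star_mem hθ hT0 hTu).1 hT)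
    z ((RP_star_mem hθ hz0 hzu).1 hz) z' ((RP_star_mem hθ hz'0 hz'u).1 hz')
    h1 h2 h3 h4 h5 h6

lemma fin1_subset (A B : Set (Fin 1)) : A ⊆ B ∨ B ⊆ A := by
  by_cases h : A ⊆ B
  · exact Or.inl h
  · right
    obtain ⟨x, hxA, hxB⟩ := Set.not_subset.1 h
    intro y hy
    have hyx : y = x := Subsingleton.elim y x
    subst hyx
    exact absurd hy hxB

lemma tensor_theta {m n : ℕ} (f : Str m → Bool) (g : Str n → Bool) :
    tensor f g (theta (m + n)) = (f (theta m) && g (theta n)) := rfl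

lemma isType_theta : ∀ {n : ℕ} {f : Str n → Bool}, IsType n f → f (theta n) = true := by
  intro n f h
  induction h with
  | one => rfl
  | dual h ih => simp [star]
  | perm σ h ih => exact ih
  | tens hf hg ihf ihg => rw [tensor_theta, ihf, ihg]; rfl

lemma NB_of_isType {n : ℕ} {f : Str n → Bool} (h : IsType n f) :
    NB (reducedPoset f) := by
  induction h with
  | one => exact fun S _ T _ z _ z' _ _ _ _ _ _ _ => fin1_subset z z'
  | dual h ih => exact NB_star (isType_theta h) ih
  | perm σ h ih => exact NB_perm _ σ ih
  | tens hf hg ihf ihg => exact NB_tensor ihf ihg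


/-- for incomparable `S, T ∈ 𝓟_f^0` of a type function `f`, both
`S^↓ ∩ T^↓` and `S^↑ ∩ T^↑` are empty or chains. -/
theorem stmt16 {n : ℕ} (f : Str n → Bool) (hf : IsType n f)
    (S T : Set (Fin n)) (hS : S ∈ reducedPoset f) (hT : T ∈ reducedPoset f)
    (hST : ¬ S ⊆ T) (hTS : ¬ T ⊆ S) :
    (downSet f S ∩ downSet f T = ∅ ∨ IsChain (· ⊆ ·) (downSet f S ∩ downSet f T)) ∧
    (upSet f S ∩ upSet f T = ∅ ∨ IsChain (· ⊆ ·) (upSet f S ∩ upSet f T)) := by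
  have hNB := NB_of_isType hf
  constructor
  · right
    exact fun z hz z' hz' _ =>
      hNB S hS T hT z hz.1.1 z' hz'.1.1 hz.1.2 hz.2.2 hz'.1.2 hz'.2.2 hST hTS
  · right
    intro X hX X' hX' hne
    by_contra hc
    push_neg at hc
    rcases hNB X hX.1.1 X' hX'.1.1 S hS T hT hX.1.2 hX'.1.2 hX.2.2 hX'.2.2
      hc.1 hc.2 with h | h
    · exact hST h
    · exact hTS h

end HOT
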